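/- Let E be an elliptic curve with an automorphism ρ of order 3 acting on H^{1,0}(E) by a character χ, and let Y be a projective variety with a μ₃-action ρ₁ such that H^n(Y,ℚ[ω]) decomposes into eigenspaces. Let Ỹ = (Y × E)/⟨ρ₁ × ρ⁻¹⟩. Then H^{n+1}(Ỹ, ℚ[ω]) ≅ [H^n_{χ₁}(Y) ⊗ H^1_{χ₂}(E)] ⊕ [H^n_{χ̄₁}(Y) ⊗ H^1_{χ̄₂}(E)], where χ_i are the characters whose eigenspaces contain the top-degree holomorphic forms. In particular, since dim_{ℚ[ω]} H^1_{χ₂}(E,ℚ[ω]) = 1, there is an isomorphism H^{n+1}_{χ̃}(Ỹ, ℚ[ω]) ≅ H^n_{χ₁}(Y, ℚ[ω]) of ℚ[ω]-vector spaces compatible with the Hodge filtrations (an isomorphism of Hodge structures of ball type). -/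

import Mathlib

open scoped TensorProduct

section Aux

variable {K : Type*} [Field K] {V : Type*} [AddCommGroup V] [Module K V]

lemma aux_quad (g : Module.End K V) (hg3 : g ^ 3 = 1)
    (hgtriv : Module.End.eigenspace g 1 = ⊥) : g ^ 2 + g + 1 = 0 := by
  have hfac : (g - 1) * (g ^ 2 + g + 1) = g ^ 3 - 1 := by noncomm_ring
  apply LinearMap.ext; intro x
  have h0 : (g - 1) (((g ^ 2 + g + 1 : Module.End K V) x)) = 0 := by
    rw [← Module.End.mul_apply, hfac, hg3, sub_self]; rfl
  have hmem : (((g ^ 2 + g + 1 : Module.End K V) x)) ∈ Module.End.eigenspace g 1 := by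
    rw [Module.End.mem_eigenspace_iff, one_smul, ← sub_eq_zero]
    simpa [LinearMap.sub_apply] using h0
  rw [hgtriv, Submodule.mem_bot] at hmem
  simpa using hmem

lemma aux_proj (ω : K) (hω3 : ω ^ 3 = 1) (hchar : 1 + ω + ω ^ 2 = 0)
    (hne : ω - ω ^ 2 ≠ 0) (g : Module.End K V) (hquad : g ^ 2 + g + 1 = 0) :
    ∃ p q : Module.End K V, p + q = 1 ∧ g * p = ω • p ∧ g * q = ω ^ 2 • q ∧
      Commute g p ∧ Commute g q := by
  set c : K := (ω - ω ^ 2)⁻¹ with hc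
  have hgg : g * g = g ^ 2 := (sq g).symm
  have key1 : (g - ω • 1) * (g - ω ^ 2 • 1) = 0 := by
    rw [← hquad]
    simp only [mul_sub, sub_mul, smul_mul_assoc, mul_smul_comm, one_mul, mul_one,
      smul_smul, hgg]
    match_scalars
    · ring
    · linear_combination -hchar
    · linear_combination hω3
  have key2 : (g - ω ^ 2 • 1) * (g - ω • 1) = 0 := by
    rw [← hquad]
    simp only [mul_sub, sub_mul, smul_mul_assoc, mul_smul_comm, one_mul, mul_one,
      smul_smul, hgg]
    match_scalars
    · ring
    · linear_combination -hchar
    · linear_combination hω3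
  refine ⟨c • (g - ω ^ 2 • 1), (-c) • (g - ω • 1), ?_, ?_, ?_, ?_, ?_⟩
  · match_scalars
    · ring
    · rw [hc]; linear_combination inv_mul_cancel₀ hne
  · rw [sub_mul] at key1
    have h2 := sub_eq_zero.mp key1
    rw [smul_mul_assoc, one_mul] at h2
    rw [mul_smul_comm, h2, smul_comm]
  · rw [sub_mul] at key2
    have h2 := sub_eq_zero.mp key2
    rw [smul_mul_assoc, one_mul] at h2
    rw [mul_smul_comm, h2, smul_comm]
  · exact (((Commute.refl g).sub_right (((Commute.one_right g).smul_right (ω ^ 2)))).smul_right c)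
  · exact (((Commute.refl g).sub_right (((Commute.one_right g).smul_right ω))).smul_right (-c))

end Aux

section Aux2

variable {K : Type*} [Field K] {V W : Type*} [AddCommGroup V] [Module K V]
  [AddCommGroup W] [Module K W]

lemma aux_cross (g : Module.End K V) (h2 : Module.End K W)
    (a : Module.End K V) (b : Module.End K W) (μ ν : K)
    (hga : g * a = μ • a) (hag : Commute g a)
    (hhb : h2 * b = ν • b) (hbh : Commute h2 b)
    (z : V ⊗[K] W)
    (hz : TensorProduct.map (g : V →ₗ[K] V) (h2 : W →ₗ[K] W) z = z)
    (hμν : μ * ν ≠ 1) :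
    TensorProduct.map (a : V →ₗ[K] V) (b : W →ₗ[K] W) z = 0 := by
  have e1 : (a : V →ₗ[K] V) ∘ₗ (g : V →ₗ[K] V) = μ • (a : V →ₗ[K] V) := by
    rw [← Module.End.mul_eq_comp, ← hag.eq, hga]
  have e2 : (b : W →ₗ[K] W) ∘ₗ (h2 : W →ₗ[K] W) = ν • (b : W →ₗ[K] W) := by
    rw [← Module.End.mul_eq_comp, ← hbh.eq, hhb]
  have hcomp : TensorProduct.map (a : V →ₗ[K] V) (b : W →ₗ[K] W) ∘ₗ
      TensorProduct.map (g : V →ₗ[K] V) (h2 : W →ₗ[K] W)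
      = (μ * ν) • TensorProduct.map (a : V →ₗ[K] V) (b : W →ₗ[K] W) := by
    rw [← TensorProduct.map_comp, e1, e2, TensorProduct.map_smul_left,
      TensorProduct.map_smul_right, smul_smul]
  have hfix : TensorProduct.map (a : V →ₗ[K] V) (b : W →ₗ[K] W) z
      = (μ * ν) • TensorProduct.map (a : V →ₗ[K] V) (b : W →ₗ[K] W) z := by
    conv_lhs => rw [← hz, ← LinearMap.comp_apply, hcomp]
    rw [LinearMap.smul_apply]
  have h0 : (1 - μ * ν) • TensorProduct.map (a : V →ₗ[K] V) (b : W →ₗ[K] W) z = 0 := by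
    rw [sub_smul, one_smul, ← hfix, sub_self]
  rcases smul_eq_zero.mp h0 with h | h
  · exact absurd (sub_eq_zero.mp h).symm hμν
  · exact h

lemma aux_block (a : Module.End K V) (b : Module.End K W)
    (S : Submodule K V) (T : Submodule K W)
    (hS : ∀ x, a x ∈ S) (hT : ∀ y, b y ∈ T) (z : V ⊗[K] W) :
    TensorProduct.map (a : V →ₗ[K] V) (b : W →ₗ[K] W) z
      ∈ LinearMap.range (TensorProduct.map S.subtype T.subtype) := by
  have hfac : TensorProduct.map (a : V →ₗ[K] V) (b : W →ₗ[K] W)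
      = (TensorProduct.map S.subtype T.subtype) ∘ₗ
        TensorProduct.map (LinearMap.codRestrict S a hS) (LinearMap.codRestrict T b hT) := by
    rw [← TensorProduct.map_comp, LinearMap.subtype_comp_codRestrict,
      LinearMap.subtype_comp_codRestrict]
  rw [hfac]
  exact ⟨_, rfl⟩

end Aux2
theorem halftwist_kunneth_eigenspace
    {K : Type*} [Field K] (ω : K) (hω : IsPrimitiveRoot ω 3)
    {V W : Type*} [AddCommGroup V] [Module K V] [AddCommGroup W] [Module K W]
    [FiniteDimensional K V] [FiniteDimensional K W]
    (g : Module.End K V) (h : Module.End K W)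
    (hg3 : g ^ 3 = 1) (hh3 : h ^ 3 = 1)
    (hgtriv : Module.End.eigenspace g 1 = ⊥)
    (hhtriv : Module.End.eigenspace h 1 = ⊥) :
    (Module.End.eigenspace
        ((TensorProduct.map (g : V →ₗ[K] V) ((h ^ 2 : Module.End K W) : W →ₗ[K] W))
          : Module.End K (V ⊗[K] W)) 1
      = LinearMap.range (TensorProduct.map
            (Module.End.eigenspace g ω).subtype (Module.End.eigenspace h ω).subtype)
        ⊔ LinearMap.range (TensorProduct.map
            (Module.End.eigenspace g (ω ^ 2)).subtype
            (Module.End.eigenspace h (ω ^ 2)).subtype))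
    ∧ (Module.finrank K (Module.End.eigenspace h ω) = 1 →
        Nonempty
          (↥(LinearMap.range (TensorProduct.map
              (Module.End.eigenspace g ω).subtype (Module.End.eigenspace h ω).subtype))
            ≃ₗ[K] ↥(Module.End.eigenspace g ω))) := by
  -- basic facts about ω
  have hω3 : ω ^ 3 = 1 := hω.pow_eq_one
  have hωne1 : ω ≠ 1 := hω.ne_one (by norm_num)
  have hchar : 1 + ω + ω ^ 2 = 0 := by
    have hfac : (ω - 1) * (1 + ω + ω ^ 2) = 0 := by linear_combination hω3
    rcases mul_eq_zero.mp hfac with h' | h'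
    · exact absurd (sub_eq_zero.mp h') hωne1
    · exact h'
  have hω0 : ω ≠ 0 := by
    intro h'; rw [h'] at hω3; norm_num at hω3
  have hω21 : ω ^ 2 ≠ 1 := by
    intro h'
    apply hωne1
    calc ω = ω * ω ^ 2 := by rw [h', mul_one]
    _ = 1 := by linear_combination hω3
  have hne : ω - ω ^ 2 ≠ 0 := by
    intro h'
    have : ω * (1 - ω) = 0 := by linear_combination h'
    rcases mul_eq_zero.mp this with h'' | h''
    · exact hω0 h''
    · exact hωne1 (sub_eq_zero.mp h'').symm
  -- projectors
  obtain ⟨p, q, hpq, hgp, hgq, hcp, hcq⟩ :=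
    aux_proj ω hω3 hchar hne g (aux_quad g hg3 hgtriv)
  obtain ⟨p', q', hpq', hhp, hhq, hcp', hcq'⟩ :=
    aux_proj ω hω3 hchar hne h (aux_quad h hh3 hhtriv)
  -- action of h² on the projectors
  have hh2p : (h ^ 2) * p' = ω ^ 2 • p' := by
    rw [sq, mul_assoc, hhp, mul_smul_comm, hhp, smul_smul, ← sq]
  have hh2q : (h ^ 2) * q' = ω • q' := by
    rw [sq, mul_assoc, hhq, mul_smul_comm, hhq, smul_smul,
      show ω ^ 2 * ω ^ 2 = ω from by linear_combination ω * hω3]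
  -- eigenspace memberships of the projector images
  have hpmem : ∀ x, p x ∈ Module.End.eigenspace g ω := fun x =>
    Module.End.mem_eigenspace_iff.mpr (by simpa using DFunLike.congr_fun hgp x)
  have hqmem : ∀ x, q x ∈ Module.End.eigenspace g (ω ^ 2) := fun x =>
    Module.End.mem_eigenspace_iff.mpr (by simpa using DFunLike.congr_fun hgq x)
  have hpmem' : ∀ y, p' y ∈ Module.End.eigenspace h ω := fun y =>
    Module.End.mem_eigenspace_iff.mpr (by simpa using DFunLike.congr_fun hhp y)
  have hqmem' : ∀ y, q' y ∈ Module.End.eigenspace h (ω ^ 2) := fun y =>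
    Module.End.mem_eigenspace_iff.mpr (by simpa using DFunLike.congr_fun hhq y)
  constructor
  · apply le_antisymm
    · -- ⊆ : decompose a fixed vector into its four blocks
      intro z hz
      have hz' : TensorProduct.map (g : V →ₗ[K] V)
          ((h ^ 2 : Module.End K W) : W →ₗ[K] W) z = z := by
        have := Module.End.mem_eigenspace_iff.mp hz
        rwa [one_smul] at this
      have hid : TensorProduct.map (p : V →ₗ[K] V) (p' : W →ₗ[K] W)
          + TensorProduct.map (p : V →ₗ[K] V) (q' : W →ₗ[K] W)
          + TensorProduct.map (q : V →ₗ[K] V) (p' : W →ₗ[K] W)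
          + TensorProduct.map (q : V →ₗ[K] V) (q' : W →ₗ[K] W) = LinearMap.id := by
        have e : TensorProduct.map (p : V →ₗ[K] V) (p' : W →ₗ[K] W)
            + TensorProduct.map (p : V →ₗ[K] V) (q' : W →ₗ[K] W)
            + TensorProduct.map (q : V →ₗ[K] V) (p' : W →ₗ[K] W)
            + TensorProduct.map (q : V →ₗ[K] V) (q' : W →ₗ[K] W)
            = TensorProduct.map ((p + q : Module.End K V) : V →ₗ[K] V)
                ((p' + q' : Module.End K W) : W →ₗ[K] W) := by
          rw [TensorProduct.map_add_left, TensorProduct.map_add_right,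
            TensorProduct.map_add_right]
          abel
        rw [e, hpq, hpq']
        exact TensorProduct.map_id
      have hz4 : z = TensorProduct.map (p : V →ₗ[K] V) (p' : W →ₗ[K] W) z
          + TensorProduct.map (p : V →ₗ[K] V) (q' : W →ₗ[K] W) z
          + TensorProduct.map (q : V →ₗ[K] V) (p' : W →ₗ[K] W) z
          + TensorProduct.map (q : V →ₗ[K] V) (q' : W →ₗ[K] W) z := by
        have := DFunLike.congr_fun hid z
        simpa using this.symm
      have hcross1 : TensorProduct.map (p : V →ₗ[K] V) (q' : W →ₗ[K] W) z = 0 :=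
        aux_cross g (h ^ 2) p q' ω ω hgp hcp hh2q (hcq'.pow_left 2) z hz'
          (by rw [← sq]; exact hω21)
      have hcross2 : TensorProduct.map (q : V →ₗ[K] V) (p' : W →ₗ[K] W) z = 0 :=
        aux_cross g (h ^ 2) q p' (ω ^ 2) (ω ^ 2) hgq hcq hh2p (hcp'.pow_left 2) z hz'
          (by rw [show ω ^ 2 * ω ^ 2 = ω from by linear_combination ω * hω3]; exact hωne1)
      rw [hz4, hcross1, hcross2, add_zero, add_zero]
      exact Submodule.add_mem _
        (Submodule.mem_sup_left (aux_block p p' _ _ hpmem hpmem' z))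
        (Submodule.mem_sup_right (aux_block q q' _ _ hqmem hqmem' z))
    · -- ⊇ : each block consists of fixed vectors
      apply sup_le
      · rintro _ ⟨w, rfl⟩
        rw [Module.End.mem_eigenspace_iff, one_smul, ← LinearMap.comp_apply,
          ← TensorProduct.map_comp]
        have e1 : (g : V →ₗ[K] V) ∘ₗ (Module.End.eigenspace g ω).subtype
            = ω • (Module.End.eigenspace g ω).subtype :=
          LinearMap.ext fun x => by simpa using Module.End.mem_eigenspace_iff.mp x.2
        have e2 : ((h ^ 2 : Module.End K W) : W →ₗ[K] W) ∘ₗ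
            (Module.End.eigenspace h ω).subtype
            = ω ^ 2 • (Module.End.eigenspace h ω).subtype := by
          apply LinearMap.ext; intro y
          have hy := Module.End.mem_eigenspace_iff.mp y.2
          simp [sq, Module.End.mul_apply, hy, smul_smul]
        rw [e1, e2, TensorProduct.map_smul_left, TensorProduct.map_smul_right, smul_smul,
          show ω * ω ^ 2 = 1 from by linear_combination hω3, one_smul]
      · rintro _ ⟨w, rfl⟩
        rw [Module.End.mem_eigenspace_iff, one_smul, ← LinearMap.comp_apply,
          ← TensorProduct.map_comp]
        have e1 : (g : V →ₗ[K] V) ∘ₗ (Module.End.eigenspace g (ω ^ 2)).subtype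
            = ω ^ 2 • (Module.End.eigenspace g (ω ^ 2)).subtype :=
          LinearMap.ext fun x => by simpa using Module.End.mem_eigenspace_iff.mp x.2
        have e2 : ((h ^ 2 : Module.End K W) : W →ₗ[K] W) ∘ₗ
            (Module.End.eigenspace h (ω ^ 2)).subtype
            = ω • (Module.End.eigenspace h (ω ^ 2)).subtype := by
          apply LinearMap.ext; intro y
          have hy := Module.End.mem_eigenspace_iff.mp y.2
          simp only [LinearMap.comp_apply, Submodule.coe_subtype, LinearMap.smul_apply, sq,
            Module.End.mul_apply, hy, map_smul, smul_smul]
          rw [show ω * ω * (ω * ω) = ω from by linear_combination ω * hω3]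
        rw [e1, e2, TensorProduct.map_smul_left, TensorProduct.map_smul_right, smul_smul,
          show ω ^ 2 * ω = 1 from by linear_combination hω3, one_smul]
  · -- the χ̃-part is isomorphic to V_χ since dim W_χ = 1
    intro hdim
    have hinj : Function.Injective (TensorProduct.map
        (Module.End.eigenspace g ω).subtype (Module.End.eigenspace h ω).subtype) :=
      Module.Flat.tensorProduct_mapIncl_injective_of_right _ _
    have e := LinearEquiv.ofInjective _ hinj
    have hfr : Module.finrank K (LinearMap.range (TensorProduct.map
        (Module.End.eigenspace g ω).subtype (Module.End.eigenspace h ω).subtype))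
        = Module.finrank K (Module.End.eigenspace g ω) := by
      rw [← e.finrank_eq, Module.finrank_tensorProduct, hdim, mul_one]
    exact ⟨LinearEquiv.ofFinrankEq _ _ hfr⟩
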